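/- Let f : X → X be an expansive homeomorphism of a compact metric space. If X = Per(f), i.e., every point of X is periodic, then X is a finite set. -/

import Mathlib

open Metric Filter Function Set

variable {X : Type*} [MetricSpace X]

/-- A δ-chain of length ≥ 1 from x to y. -/
def IsChain' (f : X → X) (δ : ℝ) (x y : X) : Prop :=
  ∃ k : ℕ, 1 ≤ k ∧ ∃ c : ℕ → X, c 0 = x ∧ c k = y ∧ ∀ i < k, dist (f (c i)) (c (i + 1)) ≤ δ

/-- The chain recurrent set. -/
def CR (f : X → X) : Set X := {x | ∀ δ > 0, IsChain' f δ x x}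

/-- Sensitive points of f restricted to S. -/
def SenOn (f : X → X) (S : Set X) : Set X :=
  {x | x ∈ S ∧ ∃ a > 0, ∀ δ > 0, ∃ y ∈ S, dist x y ≤ δ ∧ ∃ i : ℕ, a < dist (f^[i] x) (f^[i] y)}

/-- Equicontinuity of a map (uniform over all forward iterates). -/
def Equicont (f : X → X) : Prop :=
  ∀ ε > 0, ∃ δ > 0, ∀ z w : X, dist z w ≤ δ → ∀ i : ℕ, dist (f^[i] z) (f^[i] w) ≤ ε

/-- The i-th iterate (i ∈ ℤ) of a homeomorphism. -/
def ziter (f : X ≃ₜ X) (i : ℤ) : X → X :=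
  fun x => if 0 ≤ i then (⇑f)^[i.toNat] x else (⇑f.symm)^[(-i).toNat] x

/-- Expansiveness of a homeomorphism. -/
def Expansive (f : X ≃ₜ X) : Prop :=
  ∃ e > 0, ∀ x y : X, (∀ i : ℤ, dist (ziter f i x) (ziter f i y) ≤ e) → x = y

/-- e is an expansive constant for f on S. -/
def ExpConstOn (f : X ≃ₜ X) (S : Set X) (e : ℝ) : Prop :=
  ∀ x y : X, (∀ i : ℤ, ziter f i x ∈ S) → (∀ i : ℤ, ziter f i y ∈ S) →
    (∀ i : ℤ, dist (ziter f i x) (ziter f i y) ≤ e) → x = y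

/-- Periodic points. -/
def Per (f : X → X) : Set X := {x | ∃ j : ℕ, 1 ≤ j ∧ f^[j] x = x}

/-- Closed r-neighborhood of a set. -/
def nbd (r : ℝ) (S : Set X) : Set X := {y | infDist y S ≤ r}

open Topology

def zit (f : X ≃ₜ X) (i : ℤ) : X → X := ⇑(f.toEquiv ^ i)

lemma zit_natCast (f : X ≃ₜ X) (m : ℕ) : zit f (m : ℤ) = (⇑f)^[m] := by
  simp [zit, zpow_natCast, Equiv.Perm.coe_pow]

lemma zit_neg_natCast (f : X ≃ₜ X) (m : ℕ) : zit f (-(m : ℤ)) = (⇑f.symm)^[m] := by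
  have h : f.toEquiv ^ (-(m:ℤ)) = (f.toEquiv⁻¹) ^ m := by
    rw [zpow_neg, zpow_natCast, inv_pow]
  simp [zit, h, Equiv.Perm.coe_pow, Equiv.Perm.inv_def]

lemma ziter_eq_zit (f : X ≃ₜ X) (i : ℤ) : ziter f i = zit f i := by
  rcases le_or_gt 0 i with h | h
  · funext x
    simp only [ziter, if_pos h]
    conv_rhs => rw [← Int.toNat_of_nonneg h]
    rw [zit_natCast]
  · funext x
    simp only [ziter, if_neg (not_le.2 h)]
    have hi : i = -(((-i).toNat : ℕ) : ℤ) := by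
      rw [Int.toNat_of_nonneg (by omega)]; ring
    conv_rhs => rw [hi]
    rw [zit_neg_natCast]

lemma zit_add (f : X ≃ₜ X) (i j : ℤ) (x : X) :
    zit f (i + j) x = zit f i (zit f j x) := by
  simp [zit, zpow_add, Equiv.Perm.mul_apply]

lemma zit_continuous (f : X ≃ₜ X) (i : ℤ) : Continuous (zit f i) := by
  rcases le_or_gt 0 i with h | h
  · have hz : zit f i = (⇑f)^[i.toNat] := by
      conv_lhs => rw [← Int.toNat_of_nonneg h]
      rw [zit_natCast]
    rw [hz]; exact f.continuous.iterate _
  · have hz : zit f i = (⇑f.symm)^[(-i).toNat] := by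
      have hi : i = -(((-i).toNat : ℕ) : ℤ) := by
        rw [Int.toNat_of_nonneg (by omega)]; ring
      conv_lhs => rw [hi]
      rw [zit_neg_natCast]
    rw [hz]; exact f.symm.continuous.iterate _

lemma zit_fix_mul (f : X ≃ₜ X) {P : ℤ} {x : X} (hP : zit f P x = x) :
    ∀ t : ℤ, zit f (P * t) x = x := by
  have h1 : (f.toEquiv ^ P) x = x := hP
  have h2 : (f.toEquiv ^ P)⁻¹ x = x := by
    conv_lhs => rw [← h1]
    simp
  have hfix : ∀ t : ℤ, ((f.toEquiv ^ P) ^ t) x = x := by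
    intro t
    induction t using Int.induction_on with
    | zero => simp
    | succ k ih => rw [zpow_add, zpow_one, Equiv.Perm.mul_apply, h1, ih]
    | pred k ih => rw [sub_eq_add_neg, zpow_add, zpow_neg_one,
        Equiv.Perm.mul_apply, h2, ih]
  intro t
  have h3 : f.toEquiv ^ (P * t) = (f.toEquiv ^ P) ^ t := zpow_mul _ _ _
  simpa [zit, h3] using hfix t

lemma zit_reduce (f : X ≃ₜ X) {P : ℤ} (hP1 : 0 < P) {x : X} (hP : zit f P x = x)
    (i : ℤ) : zit f i x = zit f (i % P) x := by
  conv_lhs => rw [← Int.mul_ediv_add_emod i P]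
  rw [add_comm, zit_add, zit_fix_mul f hP]

lemma zit_nat_period (f : X ≃ₜ X) {m : ℕ} {x : X} (hm : (⇑f)^[m] x = x) (k : ℕ) :
    zit f ((m * k : ℕ) : ℤ) x = x := by
  rw [zit_natCast, Function.iterate_mul]
  exact Function.iterate_fixed hm k

lemma exists_escape (f : X ≃ₜ X) {e : ℝ} (he : 0 < e)
    (hE : ∀ x y : X, (∀ i : ℤ, dist (zit f i x) (zit f i y) ≤ e) → x = y)
    {x y : X} (hx : x ∈ Per ⇑f) (hy : y ∈ Per ⇑f) (hxy : y ≠ x) :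
    ∃ j : ℕ, e / 2 < dist (zit f j y) (zit f j x) := by
  obtain ⟨n, hn1, hnx⟩ := hx
  obtain ⟨m, hm1, hmy⟩ := hy
  by_contra hcon
  push_neg at hcon
  have hne : ¬ ∀ i : ℤ, dist (zit f i y) (zit f i x) ≤ e := fun H => hxy (hE y x H)
  push_neg at hne
  obtain ⟨i, hi⟩ := hne
  have hN1 : 0 < ((m * n : ℕ) : ℤ) := by exact_mod_cast Nat.mul_pos hm1 hn1
  have hyN : zit f ((m * n : ℕ) : ℤ) y = y := zit_nat_period f hmy n
  have hxN : zit f ((m * n : ℕ) : ℤ) x = x := by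
    rw [Nat.mul_comm]; exact zit_nat_period f hnx m
  have hr0 : 0 ≤ i % ((m * n : ℕ) : ℤ) := Int.emod_nonneg i (by omega)
  have hbig : e < dist (zit f (((i % ((m * n : ℕ) : ℤ)).toNat : ℕ) : ℤ) y)
      (zit f (((i % ((m * n : ℕ) : ℤ)).toNat : ℕ) : ℤ) x) := by
    rw [Int.toNat_of_nonneg hr0, ← zit_reduce f hN1 hyN i, ← zit_reduce f hN1 hxN i]
    exact hi
  have := hcon (i % ((m * n : ℕ) : ℤ)).toNat
  linarith

theorem stmt_15 [CompactSpace X] (f : X ≃ₜ X) (hexp : Expansive f)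
    (hper : ∀ x : X, x ∈ Per ⇑f) :
    Finite X := by
  have hexp' : ∃ e > 0, ∀ x y : X, (∀ i : ℤ, dist (ziter f i x) (ziter f i y) ≤ e) → x = y := hexp
  classical
  by_contra hfin
  obtain ⟨e, he, hE0⟩ := hexp'
  have hE : ∀ x y : X, (∀ i : ℤ, dist (zit f i x) (zit f i y) ≤ e) → x = y := by
    intro x y h
    refine hE0 x y fun i => ?_
    rw [ziter_eq_zit]; exact h i
  -- there is an accumulation point
  obtain ⟨x, hx⟩ : ∃ x : X, (𝓝[≠] x).NeBot := by
    by_contra h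
    push_neg at h
    have : DiscreteTopology X :=
      discreteTopology_iff_nhds_ne.2 fun x => h x
    exact hfin finite_of_compact_of_discrete
  haveI := hx
  obtain ⟨y0, hy0⟩ := exists_seq_tendsto (𝓝[≠] x)
  have hy0ne : ∀ᶠ k in atTop, y0 k ≠ x := hy0 self_mem_nhdsWithin
  rw [eventually_atTop] at hy0ne
  obtain ⟨K, hK⟩ := hy0ne
  set Y : ℕ → X := fun k => y0 (k + K) with hYdef
  have hYne : ∀ k, Y k ≠ x := fun k => hK _ (by omega)
  have hYlim : Tendsto Y atTop (𝓝 x) :=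
    (hy0.mono_right nhdsWithin_le_nhds).comp (tendsto_add_atTop_nat K)
  -- escape times
  have hne : ∀ k, ∃ j : ℕ, e / 2 < dist (zit f j (Y k)) (zit f j x) :=
    fun k => exists_escape f he hE (hper x) (hper (Y k)) (hYne k)
  set j : ℕ → ℕ := fun k => Nat.find (hne k) with hjdef
  have hjs : ∀ k, e / 2 < dist (zit f (j k) (Y k)) (zit f (j k) x) :=
    fun k => Nat.find_spec (hne k)
  have hjm : ∀ k, ∀ l < j k, dist (zit f l (Y k)) (zit f l x) ≤ e / 2 :=
    fun k l hl => not_lt.1 (Nat.find_min (hne k) hl)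
  -- escape times tend to infinity
  have hjT : Tendsto j atTop atTop := by
    rw [tendsto_atTop_atTop]
    intro b
    have hev : ∀ᶠ k in atTop, ∀ l ∈ Finset.range (b + 1),
        dist (zit f l (Y k)) (zit f l x) < e / 2 := by
      rw [Filter.eventually_all_finset]
      intro l _
      have hc : Tendsto (fun k => dist (zit f l (Y k)) (zit f l x)) atTop
          (𝓝 (dist (zit f l x) (zit f l x))) :=
        Filter.Tendsto.dist (((zit_continuous f l).tendsto x).comp hYlim)
          tendsto_const_nhds
      rw [dist_self] at hc
      exact hc.eventually (gt_mem_nhds (by positivity))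
    rw [eventually_atTop] at hev
    obtain ⟨N, hN⟩ := hev
    refine ⟨N, fun k hk => ?_⟩
    by_contra hb
    push_neg at hb
    exact absurd (hjs k)
      (not_lt.2 (le_of_lt (hN k hk (j k) (Finset.mem_range.2 (by omega)))))
  set z : ℕ → X := fun k => zit f ((j k - 1 : ℕ) : ℤ) (Y k) with hzdef
  set w : ℕ → X := fun k => zit f ((j k - 1 : ℕ) : ℤ) x with hwdef
  obtain ⟨p, -, φ, hφ, hlim⟩ :=
    isCompact_univ.tendsto_subseq (fun k => Set.mem_univ ((z k, w k) : X × X))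
  have hzlim : Tendsto (fun k => z (φ k)) atTop (𝓝 p.1) :=
    (continuous_fst.tendsto p).comp hlim
  have hwlim : Tendsto (fun k => w (φ k)) atTop (𝓝 p.2) :=
    (continuous_snd.tendsto p).comp hlim
  have hjφ : Tendsto (fun k => j (φ k)) atTop atTop := hjT.comp hφ.tendsto_atTop
  -- backward orbit bound
  have hA : ∀ i : ℕ, dist (zit f (-(i : ℤ)) p.1) (zit f (-(i : ℤ)) p.2) ≤ e / 2 := by
    intro i
    have hcd : Tendsto
        (fun k => dist (zit f (-(i : ℤ)) (z (φ k))) (zit f (-(i : ℤ)) (w (φ k)))) atTop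
        (𝓝 (dist (zit f (-(i : ℤ)) p.1) (zit f (-(i : ℤ)) p.2))) :=
      Filter.Tendsto.dist (((zit_continuous f _).tendsto _).comp hzlim)
        (((zit_continuous f _).tendsto _).comp hwlim)
    refine le_of_tendsto hcd ?_
    filter_upwards [hjφ.eventually_ge_atTop (i + 2)] with k hk
    have h1 : zit f (-(i : ℤ)) (z (φ k))
        = zit f ((j (φ k) - 1 - i : ℕ) : ℤ) (Y (φ k)) := by
      show zit f (-(i : ℤ)) (zit f ((j (φ k) - 1 : ℕ) : ℤ) (Y (φ k))) = _
      rw [← zit_add]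
      congr 1
      omega
    have h2 : zit f (-(i : ℤ)) (w (φ k))
        = zit f ((j (φ k) - 1 - i : ℕ) : ℤ) x := by
      show zit f (-(i : ℤ)) (zit f ((j (φ k) - 1 : ℕ) : ℤ) x) = _
      rw [← zit_add]
      congr 1
      omega
    rw [h1, h2]
    exact hjm _ _ (by omega)
  -- separation at time 1
  have hB : e / 2 ≤ dist (zit f 1 p.1) (zit f 1 p.2) := by
    have hcd : Tendsto
        (fun k => dist (zit f 1 (z (φ k))) (zit f 1 (w (φ k)))) atTop
        (𝓝 (dist (zit f 1 p.1) (zit f 1 p.2))) :=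
      Filter.Tendsto.dist (((zit_continuous f _).tendsto _).comp hzlim)
        (((zit_continuous f _).tendsto _).comp hwlim)
    refine ge_of_tendsto hcd ?_
    filter_upwards [hjφ.eventually_ge_atTop 1] with k hk
    have h1 : zit f 1 (z (φ k)) = zit f ((j (φ k) : ℕ) : ℤ) (Y (φ k)) := by
      show zit f 1 (zit f ((j (φ k) - 1 : ℕ) : ℤ) (Y (φ k))) = _
      rw [← zit_add]
      congr 1
      omega
    have h2 : zit f 1 (w (φ k)) = zit f ((j (φ k) : ℕ) : ℤ) x := by
      show zit f 1 (zit f ((j (φ k) - 1 : ℕ) : ℤ) x) = _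
      rw [← zit_add]
      congr 1
      omega
    rw [h1, h2]
    exact le_of_lt (hjs (φ k))
  have hzw : p.1 ≠ p.2 := by
    intro hzw
    rw [hzw, dist_self] at hB
    linarith
  -- both limits are periodic, so the bound holds for all times
  obtain ⟨pz, hpz1, hpzf⟩ := hper p.1
  obtain ⟨pw, hpw1, hpwf⟩ := hper p.2
  have hPz : zit f ((pz * pw : ℕ) : ℤ) p.1 = p.1 := zit_nat_period f hpzf pw
  have hPw : zit f ((pz * pw : ℕ) : ℤ) p.2 = p.2 := by
    rw [Nat.mul_comm]; exact zit_nat_period f hpwf pz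
  have hP1 : (1 : ℤ) ≤ ((pz * pw : ℕ) : ℤ) := by exact_mod_cast Nat.mul_pos hpz1 hpw1
  have hall : ∀ i : ℤ, dist (zit f i p.1) (zit f i p.2) ≤ e := by
    intro i
    set P : ℤ := ((pz * pw : ℕ) : ℤ) with hPdef
    set t : ℤ := max i 0 with htdef
    have ht : i ≤ P * t :=
      le_trans (le_max_left i 0) (le_mul_of_one_le_left (le_max_right i 0) hP1)
    set m : ℕ := (P * t - i).toNat with hmdef
    have hm : i - P * t = -(m : ℤ) := by
      rw [hmdef, Int.toNat_of_nonneg (by omega)]; ring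
    have key : ∀ u : X, zit f P u = u → zit f i u = zit f (-(m : ℤ)) u := by
      intro u hu
      have h0 : zit f ((i - P * t) + P * t) u = zit f (i - P * t) u := by
        rw [zit_add, zit_fix_mul f hu t]
      rw [show i - P * t + P * t = i by ring] at h0
      rw [h0, hm]
    rw [key p.1 hPz, key p.2 hPw]
    linarith [hA m]
  exact hzw (hE p.1 p.2 hall)
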